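/- Let f be a continuous function with f(0) = 0, f < 0 on (0,θ), f > 0 on (θ,1), and let ϑ ∈ (θ,1) satisfy ∫_0^ϑ f(r) dr = 0 with ∫_0^s f(r) dr < 0 for s ∈ (0,ϑ). Fix δ ∈ (0, 1-ϑ) and let φ̊ solve φ̊'' + f(φ̊) = 0 with φ̊(0) = ϑ + δ, φ̊'(0) = 0. Then φ̊ is strictly decreasing on (0,∞) as long as it is positive, and there exists K̊ > 0 with φ̊(K̊) = 0. -/

import Mathlib

open Set Filter Topology

theorem stmt5 (f : ℝ → ℝ) (θ ϑ δ : ℝ) (hf : Continuous f) (hf0 : f 0 = 0)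
    (hθ : θ ∈ Ioo (0:ℝ) 1)
    (hneg : ∀ s ∈ Ioo 0 θ, f s < 0) (hpos : ∀ s ∈ Ioo θ 1, 0 < f s)
    (hϑ : ϑ ∈ Ioo θ 1)
    (hϑint : (∫ r in (0:ℝ)..ϑ, f r) = 0)
    (hϑneg : ∀ s ∈ Ioo (0:ℝ) ϑ, (∫ r in (0:ℝ)..s, f r) < 0)
    (hδ : δ ∈ Ioo 0 (1 - ϑ))
    (φ φ' : ℝ → ℝ)
    (hφ : ∀ y ∈ Ici (0:ℝ), HasDerivAt φ (φ' y) y)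
    (hφ' : ∀ y ∈ Ici (0:ℝ), HasDerivAt φ' (-f (φ y)) y)
    (hinit : φ 0 = ϑ + δ) (hinit' : φ' 0 = 0) :
    (∀ y₁ y₂ : ℝ, 0 < y₁ → y₁ < y₂ → (∀ z ∈ Ioc (0:ℝ) y₂, 0 < φ z) → φ y₂ < φ y₁) ∧
    ∃ K : ℝ, 0 < K ∧ φ K = 0 := by
  obtain ⟨hθ0, hθ1⟩ := hθ
  obtain ⟨hϑθ, hϑ1⟩ := hϑ
  obtain ⟨hδ0, hδ1⟩ := hδ
  have hϑδ1 : ϑ + δ < 1 := by linarith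
  have hϑδ0 : 0 < ϑ + δ := by linarith
  set F : ℝ → ℝ := fun s => ∫ r in (0:ℝ)..s, f r with hFdef
  have hFd : ∀ s, HasDerivAt F (f s) s := fun s => (hf.integral_hasStrictDerivAt 0 s).hasDerivAt
  have hFcont : Continuous F := continuous_iff_continuousAt.2 fun s => (hFd s).continuousAt
  -- F (ϑ+δ) is positive
  have hadj : ∀ s, F s + (∫ r in s..(ϑ+δ), f r) = F (ϑ+δ) := fun s =>
    intervalIntegral.integral_add_adjacent_intervals (hf.intervalIntegrable _ _)
      (hf.intervalIntegrable _ _)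
  have hIpos : ∀ s, θ ≤ s → s < ϑ + δ → 0 < ∫ r in s..(ϑ+δ), f r := by
    intro s hs hs'
    exact intervalIntegral.intervalIntegral_pos_of_pos_on (hf.intervalIntegrable _ _)
      (fun x hx => hpos x ⟨lt_of_le_of_lt hs hx.1, lt_trans hx.2 hϑδ1⟩) hs'
  have hFϑδpos : 0 < F (ϑ+δ) := by
    have h1 := hadj ϑ
    have h2 := hIpos ϑ hϑθ.le (by linarith)
    have h3 : F ϑ = 0 := hϑint
    linarith
  -- key : F s < F (ϑ+δ) for s ∈ [0, ϑ+δ)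
  have hkey : ∀ s, 0 ≤ s → s < ϑ + δ → F s < F (ϑ + δ) := by
    intro s hs0 hs1
    rcases eq_or_lt_of_le hs0 with h | h
    · have : F s = 0 := by rw [← h]; simp [hFdef]
      linarith
    rcases lt_or_ge s ϑ with h2 | h2
    · have := hϑneg s ⟨h, h2⟩
      have hFs : F s < 0 := this
      linarith
    · have h1 := hadj s
      have h2' := hIpos s (le_trans hϑθ.le h2) hs1
      linarith
  -- energy conservation
  have hE : ∀ y, 0 ≤ y → φ' y ^ 2 = 2 * F (ϑ + δ) - 2 * F (φ y) := by
    intro b hb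
    set E : ℝ → ℝ := fun y => φ' y ^ 2 + 2 * F (φ y) with hEdef
    have hEd : ∀ y, 0 ≤ y → HasDerivAt E 0 y := by
      intro y hy
      have h1 := (hφ' y hy).pow 2
      have h2 := ((hFd (φ y)).comp y (hφ y hy)).const_mul 2
      have h3 : HasDerivAt (fun y => φ' y ^ 2 + 2 * F (φ y)) _ y := h1.add h2
      convert h3 using 1
      push_cast
      ring
    have hc := constant_of_has_deriv_right_zero (f := E) (a := 0) (b := b)
      (fun y hy => (hEd y hy.1).continuousAt.continuousWithinAt)
      (fun y hy => (hEd y hy.1).hasDerivWithinAt)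
    have hcb := hc b ⟨hb, le_rfl⟩
    have hE0 : E 0 = 2 * F (ϑ + δ) := by simp [hEdef, hinit, hinit']
    have : E b = 2 * F (ϑ + δ) := hcb.trans hE0
    simp only [hEdef] at this
    linarith
  -- φ' is negative just to the right of 0
  have hsl : ∃ ε > 0, ∀ y, 0 < y → y < ε → φ' y < 0 := by
    have hd0 : HasDerivAt φ' (-f (ϑ+δ)) 0 := by
      have := hφ' 0 (mem_Ici.2 le_rfl); rwa [hinit] at this
    have hfϑδ : 0 < f (ϑ+δ) := hpos _ ⟨by linarith, hϑδ1⟩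
    have ht := hasDerivAt_iff_tendsto_slope.1 hd0
    have h2 : ∀ᶠ y in 𝓝[>] (0:ℝ), slope φ' 0 y < 0 :=
      (ht.mono_left (nhdsWithin_mono _ (fun x hx => ne_of_gt hx))).eventually_lt_const
        (by linarith)
    have h3 : ∀ᶠ y in 𝓝[>] (0:ℝ), φ' y < 0 := by
      filter_upwards [h2, self_mem_nhdsWithin] with y hy hy'
      rw [slope_def_field] at hy
      have hq : (φ' y - φ' 0) / (y - 0) < 0 := by
        simpa [div_eq_inv_mul] using hy
      rw [hinit', sub_zero, sub_zero] at hq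
      rcases div_neg_iff.1 hq with ⟨ha, hb⟩ | ⟨ha, hb⟩
      · linarith [mem_Ioi.1 hy']
      · exact ha
    obtain ⟨u, hu, hsub⟩ := mem_nhdsGT_iff_exists_Ioo_subset.1 h3
    exact ⟨u, hu, fun y h1 h2 => hsub ⟨h1, h2⟩⟩
  obtain ⟨ε, hε, hεneg⟩ := hsl
  -- continuity of φ' on nonneg reals, globalized
  have hΦ'c : Continuous (fun y => φ' (max y 0)) := by
    have h1 : ContinuousOn φ' (Ici 0) := fun y hy =>
      (hφ' y hy).continuousAt.continuousWithinAt
    exact h1.comp_continuous (continuous_id.max continuous_const) (fun y => mem_Ici.2 (le_max_right _ _))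
  -- Lemma A : φ' < 0 on (0, b] whenever φ > 0 on (0, b]
  have lemA : ∀ b, 0 < b → (∀ z ∈ Ioc (0:ℝ) b, 0 < φ z) → ∀ y ∈ Ioc (0:ℝ) b, φ' y < 0 := by
    intro b hb hpb
    by_contra hcon
    push_neg at hcon
    obtain ⟨y0, hy0, hy0'⟩ := hcon
    have hy0ε : ε ≤ y0 := by
      by_contra h
      push_neg at h
      exact absurd (hεneg y0 hy0.1 h) (not_lt.2 hy0')
    set bad : Set ℝ := Icc ε b ∩ (fun y => φ' (max y 0)) ⁻¹' Ici 0 with hbaddef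
    have hbadclosed : IsClosed bad := isClosed_Icc.inter (isClosed_Ici.preimage hΦ'c)
    have hy0bad : y0 ∈ bad := by
      refine ⟨⟨hy0ε, hy0.2⟩, ?_⟩
      simp only [mem_preimage, mem_Ici]
      rwa [max_eq_left (le_trans hε.le hy0ε)]
    have hbddb : BddBelow bad := ⟨ε, fun x hx => hx.1.1⟩
    set T := sInf bad with hTdef
    have hTbad : T ∈ bad := hbadclosed.csInf_mem ⟨y0, hy0bad⟩ hbddb
    have hTε : ε ≤ T := hTbad.1.1
    have hTb : T ≤ b := hTbad.1.2
    have hT0 : 0 < T := lt_of_lt_of_le hε hTε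
    have hφ'T : 0 ≤ φ' T := by
      have := hTbad.2
      simp only [mem_preimage, mem_Ici] at this
      rwa [max_eq_left hT0.le] at this
    -- φ' < 0 on (0, T)
    have hnegT : ∀ y ∈ Ioo (0:ℝ) T, φ' y < 0 := by
      intro y hy
      rcases lt_or_ge y ε with h | h
      · exact hεneg y hy.1 h
      · by_contra hc
        push_neg at hc
        have : y ∈ bad := by
          refine ⟨⟨h, le_trans hy.2.le hTb⟩, ?_⟩
          simp only [mem_preimage, mem_Ici]
          rwa [max_eq_left (le_trans hε.le h)]
        exact absurd hy.2 (not_lt.2 (csInf_le hbddb this))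
    -- φ strictly decreasing on [0, T]
    have hanti : StrictAntiOn φ (Icc 0 T) := by
      apply strictAntiOn_of_deriv_neg (convex_Icc 0 T)
        (fun y hy => (hφ y hy.1).continuousAt.continuousWithinAt)
      intro y hy
      rw [interior_Icc] at hy
      rw [(hφ y hy.1.le).deriv]
      exact hnegT y hy
    have hφT1 : φ T < ϑ + δ := by
      have := hanti ⟨le_rfl, hT0.le⟩ ⟨hT0.le, le_rfl⟩ hT0
      rwa [hinit] at this
    have hφT0 : 0 < φ T := hpb T ⟨hT0, hTb⟩
    have hsq : 0 < φ' T ^ 2 := by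
      rw [hE T hT0.le]
      have := hkey (φ T) hφT0.le hφT1
      linarith
    -- φ' T ≤ 0 by continuity from the left
    have hle : φ' T ≤ 0 := by
      have htd : Tendsto φ' (𝓝[<] T) (𝓝 (φ' T)) :=
        ((hφ' T hT0.le).continuousAt.tendsto).mono_left nhdsWithin_le_nhds
      refine le_of_tendsto htd ?_
      filter_upwards [Ioo_mem_nhdsLT_of_mem (show T ∈ Ioc (0:ℝ) T from ⟨hT0, le_rfl⟩)] with y hy
      exact (hnegT y hy).le
    have : φ' T = 0 := le_antisymm hle hφ'T
    rw [this] at hsq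
    simp at hsq
  -- Part 1
  have hdec : ∀ y₁ y₂ : ℝ, 0 < y₁ → y₁ < y₂ → (∀ z ∈ Ioc (0:ℝ) y₂, 0 < φ z) → φ y₂ < φ y₁ := by
    intro y₁ y₂ h1 h12 hpos2
    have hA := lemA y₂ (h1.trans h12) hpos2
    have hanti : StrictAntiOn φ (Icc y₁ y₂) := by
      apply strictAntiOn_of_deriv_neg (convex_Icc y₁ y₂)
        (fun y hy => (hφ y (le_trans h1.le hy.1)).continuousAt.continuousWithinAt)
      intro y hy
      rw [interior_Icc] at hy
      rw [(hφ y (le_trans h1.le hy.1.le)).deriv]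
      exact hA y ⟨h1.trans hy.1, hy.2.le⟩
    exact hanti ⟨le_rfl, h12.le⟩ ⟨h12.le, le_rfl⟩ h12
  refine ⟨hdec, ?_⟩
  -- Part 2
  by_contra hK
  push_neg at hK
  have hposall : ∀ z, 0 < z → 0 < φ z := by
    intro z hz
    rcases lt_trichotomy (φ z) 0 with h | h | h
    · exfalso
      have hcont : ContinuousOn φ (Icc 0 z) := fun y hy =>
        (hφ y hy.1).continuousAt.continuousWithinAt
      have h0 : (0:ℝ) ∈ Icc (φ z) (φ 0) := ⟨h.le, by rw [hinit]; linarith⟩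
      obtain ⟨K, hKmem, hKval⟩ := intermediate_value_Icc' hz.le hcont h0
      have hKne : K ≠ 0 := by
        intro he
        rw [he, hinit] at hKval
        linarith
      exact hK K (lt_of_le_of_ne hKmem.1 (Ne.symm hKne)) hKval
    · exact absurd h (hK z hz)
    · exact h
  have hallneg : ∀ y, 0 < y → φ' y < 0 := fun y hy =>
    lemA y hy (fun z hz => hposall z hz.1) y ⟨hy, le_rfl⟩
  -- φ 1 < ϑ + δ
  have hφ1lt : φ 1 < ϑ + δ := by
    have hanti : StrictAntiOn φ (Icc 0 1) := by
      apply strictAntiOn_of_deriv_neg (convex_Icc 0 1)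
        (fun y hy => (hφ y hy.1).continuousAt.continuousWithinAt)
      intro y hy
      rw [interior_Icc] at hy
      rw [(hφ y hy.1.le).deriv]
      exact hallneg y hy.1
    have := hanti ⟨le_rfl, zero_le_one⟩ ⟨zero_le_one, le_rfl⟩ one_pos
    rwa [hinit] at this
  have hφ1pos : 0 < φ 1 := hposall 1 one_pos
  -- max of F on [0, φ 1]
  obtain ⟨s₀, hs₀mem, hs₀max⟩ := isCompact_Icc.exists_isMaxOn (nonempty_Icc.2 hφ1pos.le)
    hFcont.continuousOn
  set m := F (ϑ + δ) - F s₀ with hmdef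
  have hm : 0 < m := by
    have := hkey s₀ hs₀mem.1 (lt_of_le_of_lt hs₀mem.2 hφ1lt)
    simp only [hmdef]
    linarith
  set c := Real.sqrt (2 * m) with hcdef
  have hc : 0 < c := Real.sqrt_pos.2 (by linarith)
  -- φ' y ≤ -c for y ≥ 1
  have hslope : ∀ y, 1 ≤ y → φ' y ≤ -c := by
    intro y hy
    have hy0 : (0:ℝ) ≤ y := by linarith
    have hφy1 : φ y ≤ φ 1 := by
      rcases eq_or_lt_of_le hy with h | h
      · rw [← h]
      · exact (hdec 1 y one_pos h (fun z hz => hposall z hz.1)).le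
    have hφy0 : 0 ≤ φ y := (hposall y (by linarith)).le
    have hFle : F (φ y) ≤ F s₀ := hs₀max ⟨hφy0, hφy1⟩
    have hsq : 2 * m ≤ φ' y ^ 2 := by
      rw [hE y hy0]
      simp only [hmdef]
      linarith
    have hneg' : φ' y < 0 := hallneg y (by linarith)
    have h1 : c ≤ |φ' y| := by
      rw [← Real.sqrt_sq_eq_abs]
      exact Real.sqrt_le_sqrt hsq
    rw [abs_of_neg hneg'] at h1
    linarith
  -- derive contradiction: φ becomes negative
  set Y := 1 + (φ 1 + 1) / c with hYdef
  have hY1 : 1 < Y := by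
    have : 0 < (φ 1 + 1) / c := div_pos (by linarith) hc
    simp only [hYdef]
    linarith
  set g : ℝ → ℝ := fun y => φ y + c * y with hgdef
  have hganti : AntitoneOn g (Icc 1 Y) := by
    have hgd : ∀ y, 1 ≤ y → HasDerivAt g (φ' y + c) y := by
      intro y hy
      exact (hφ y (mem_Ici.2 (by linarith))).add (((hasDerivAt_id y).const_mul c).congr_deriv (mul_one c))
    apply antitoneOn_of_deriv_nonpos (convex_Icc 1 Y)
      (fun y hy => ((hgd y hy.1).continuousAt.continuousWithinAt))
      (fun y hy => by rw [interior_Icc] at hy; exact (hgd y hy.1.le).differentiableAt.differentiableWithinAt)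
    intro y hy
    rw [interior_Icc] at hy
    rw [(hgd y hy.1.le).deriv]
    linarith [hslope y hy.1.le]
  have hgY : g Y ≤ g 1 := hganti ⟨le_rfl, hY1.le⟩ ⟨hY1.le, le_rfl⟩ hY1.le
  have hcY : c * Y = c + (φ 1 + 1) := by
    simp only [hYdef]
    field_simp
  have : φ Y ≤ -1 := by
    simp only [hgdef] at hgY
    rw [hcY] at hgY
    linarith
  linarith [hposall Y (by linarith)]
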